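/- Let r, s ∈ ℕ, let X : ℕ × ℕ → ℍ^{r×s} be a doubly indexed family of quaternionic matrices, and let K ≥ 0. Then Σ_{i∈ℕ} ‖Σ_{j∈ℕ} X_{ij}·f_j‖² ≤ K²·Σ_{j∈ℕ} ‖f_j‖² holds for every finitely supported f : ℕ → ℍ^s if and only if Σ_{i∈ℕ} ‖Σ_{j∈ℕ} χ(X_{ij})·g_j‖² ≤ K²·Σ_{j∈ℕ} ‖g_j‖² holds for every finitely supported g : ℕ → ℂ^{2s}. (Equivalently: the block operator τ = (X_{ij}) is bounded from ℓ²(ℕ,ℍ^s) to ℓ²(ℕ,ℍ^r) if and only if the block operator T = (χ(X_{ij})) is bounded from ℓ²(ℕ,ℂ^{2s}) to ℓ²(ℕ,ℂ^{2r}), and both operators have the same norm.) -/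

import Mathlib

open Quaternion Matrix

noncomputable section

/-- The complex matrix `A` in the entrywise decomposition `X = A + B e₂` of a
quaternionic matrix. -/
def qmatA {r s : ℕ} (X : Matrix (Fin r) (Fin s) ℍ[ℝ]) : Matrix (Fin r) (Fin s) ℂ :=
  Matrix.of fun i j => ((X i j).re : ℂ) + (X i j).imI * Complex.I

/-- The complex matrix `B` in the entrywise decomposition `X = A + B e₂` of a
quaternionic matrix. -/
def qmatB {r s : ℕ} (X : Matrix (Fin r) (Fin s) ℍ[ℝ]) : Matrix (Fin r) (Fin s) ℂ :=
  Matrix.of fun i j => ((X i j).imJ : ℂ) + (X i j).imK * Complex.I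

/-- The map `χ` on quaternionic matrices: `χ(X) = [[A, B], [-conj B, conj A]]`,
a complex matrix of size `2r × 2s` (indexed by sum types). -/
def chiMat {r s : ℕ} (X : Matrix (Fin r) (Fin s) ℍ[ℝ]) :
    Matrix (Fin r ⊕ Fin r) (Fin s ⊕ Fin s) ℂ :=
  Matrix.fromBlocks (qmatA X) (qmatB X)
    (-(qmatB X).map (starRingEnd ℂ)) ((qmatA X).map (starRingEnd ℂ))

/-- Squared Euclidean norm of a quaternionic vector. -/
def sqnormH {r : ℕ} (v : Fin r → ℍ[ℝ]) : ℝ := ∑ a, ‖v a‖ ^ 2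

/-- Squared Euclidean norm of a complex vector indexed by a sum type. -/
def sqnormC2 {s : ℕ} (v : Fin s ⊕ Fin s → ℂ) : ℝ := ∑ a, ‖v a‖ ^ 2

def iotaV {s : ℕ} (v : Fin s → ℍ[ℝ]) : Fin s ⊕ Fin s → ℂ :=
  Sum.elim (fun a => ⟨(v a).re, (v a).imI⟩) (fun a => ⟨-(v a).imJ, (v a).imK⟩)

def iotaInv {s : ℕ} (g : Fin s ⊕ Fin s → ℂ) : Fin s → ℍ[ℝ] :=
  fun a => ⟨(g (Sum.inl a)).re, (g (Sum.inl a)).im, -(g (Sum.inr a)).re, (g (Sum.inr a)).im⟩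

lemma iotaV_iotaInv {s : ℕ} (g : Fin s ⊕ Fin s → ℂ) : iotaV (iotaInv g) = g := by
  funext a
  cases a <;> simp [iotaV, iotaInv]

lemma iotaV_injective {s : ℕ} : Function.Injective (iotaV (s := s)) := by
  intro u v h
  funext a
  have h1 := congrFun h (Sum.inl a)
  have h2 := congrFun h (Sum.inr a)
  simp only [iotaV, Sum.elim_inl, Sum.elim_inr, Complex.mk.injEq, neg_inj] at h1 h2
  ext <;> tauto

lemma iotaV_zero {s : ℕ} : iotaV (0 : Fin s → ℍ[ℝ]) = 0 := by
  funext a; cases a <;> simp [iotaV] <;> rfl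

lemma iotaInv_zero {s : ℕ} : iotaInv (0 : Fin s ⊕ Fin s → ℂ) = 0 := by
  funext a; simp [iotaInv]; rfl

lemma iotaV_add {s : ℕ} (u v : Fin s → ℍ[ℝ]) : iotaV (u + v) = iotaV u + iotaV v := by
  funext a
  cases a <;> refine Complex.ext ?_ ?_ <;> simp [iotaV] <;> ring

lemma iotaV_sum {s : ℕ} {ι : Type*} (t : Finset ι) (v : ι → Fin s → ℍ[ℝ]) :
    iotaV (∑ j ∈ t, v j) = ∑ j ∈ t, iotaV (v j) := by
  classical
  induction t using Finset.induction_on with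
  | empty => simp [iotaV_zero]
  | insert _ _ h ih => simp [Finset.sum_insert h, iotaV_add, ih]

lemma qre_sum {ι : Type*} (t : Finset ι) (v : ι → ℍ[ℝ]) :
    (∑ j ∈ t, v j).re = ∑ j ∈ t, (v j).re := by
  classical
  induction t using Finset.induction_on with
  | empty => rfl
  | insert _ _ h ih => simp [Finset.sum_insert h, ih]

lemma qimI_sum {ι : Type*} (t : Finset ι) (v : ι → ℍ[ℝ]) :
    (∑ j ∈ t, v j).imI = ∑ j ∈ t, (v j).imI := by
  classical
  induction t using Finset.induction_on with
  | empty => rfl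
  | insert _ _ h ih => simp [Finset.sum_insert h, ih]

lemma qimJ_sum {ι : Type*} (t : Finset ι) (v : ι → ℍ[ℝ]) :
    (∑ j ∈ t, v j).imJ = ∑ j ∈ t, (v j).imJ := by
  classical
  induction t using Finset.induction_on with
  | empty => rfl
  | insert _ _ h ih => simp [Finset.sum_insert h, ih]

lemma qimK_sum {ι : Type*} (t : Finset ι) (v : ι → ℍ[ℝ]) :
    (∑ j ∈ t, v j).imK = ∑ j ∈ t, (v j).imK := by
  classical
  induction t using Finset.induction_on with
  | empty => rfl
  | insert _ _ h ih => simp [Finset.sum_insert h, ih]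

lemma norm_quat_sq (a : ℍ[ℝ]) : ‖a‖ ^ 2 = a.re ^ 2 + a.imI ^ 2 + a.imJ ^ 2 + a.imK ^ 2 := by
  rw [sq, ← Quaternion.normSq_eq_norm_mul_self, Quaternion.normSq_def']

lemma norm_c_sq (z : ℂ) : ‖z‖ ^ 2 = z.re ^ 2 + z.im ^ 2 := by
  rw [Complex.sq_norm]
  simp [Complex.normSq_apply]
  ring

lemma sqnormC2_iotaV {s : ℕ} (v : Fin s → ℍ[ℝ]) : sqnormC2 (iotaV v) = sqnormH v := by
  simp only [sqnormC2, sqnormH, Fintype.sum_sum_type, iotaV, Sum.elim_inl, Sum.elim_inr,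
    norm_quat_sq, norm_c_sq, ← Finset.sum_add_distrib]
  apply Finset.sum_congr rfl
  intro a _
  simp
  ring

lemma chiMat_mulVec {r s : ℕ} (X : Matrix (Fin r) (Fin s) ℍ[ℝ]) (v : Fin s → ℍ[ℝ]) :
    chiMat X *ᵥ iotaV v = iotaV (X *ᵥ v) := by
  funext a
  cases a with
  | inl i =>
      simp only [chiMat, fromBlocks, mulVec, dotProduct, Fintype.sum_sum_type, iotaV,
        Sum.elim_inl, Sum.elim_inr, Matrix.of_apply, qmatA, qmatB, Matrix.map_apply,
        Matrix.neg_apply, Sum.elim_lam_const_lam_const, ← Finset.sum_add_distrib]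
      apply Complex.ext
      · simp only [Complex.re_sum, qre_sum]
        apply Finset.sum_congr rfl
        intro j _
        simp [Complex.add_re, Complex.mul_re, Quaternion.re_mul]
        ring
      · simp only [Complex.im_sum, qimI_sum]
        apply Finset.sum_congr rfl
        intro j _
        simp [Complex.add_im, Complex.mul_im, Quaternion.imI_mul]
        ring
  | inr i =>
      simp only [chiMat, fromBlocks, mulVec, dotProduct, Fintype.sum_sum_type, iotaV,
        Sum.elim_inl, Sum.elim_inr, Matrix.of_apply, qmatA, qmatB, Matrix.map_apply,
        Matrix.neg_apply, Sum.elim_lam_const_lam_const, ← Finset.sum_add_distrib]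
      apply Complex.ext
      · simp only [Complex.re_sum, Complex.neg_re, qimJ_sum]
        rw [← Finset.sum_neg_distrib]
        apply Finset.sum_congr rfl
        intro j _
        simp [Complex.add_re, Complex.mul_re, Quaternion.imJ_mul]
        ring
      · simp only [Complex.im_sum, qimK_sum]
        apply Finset.sum_congr rfl
        intro j _
        simp [Complex.add_im, Complex.mul_im, Quaternion.imK_mul]
        ring

lemma support_mapRange_iotaV {s : ℕ} (f : ℕ →₀ (Fin s → ℍ[ℝ])) :
    (f.mapRange iotaV iotaV_zero).support = f.support :=
  Finsupp.support_mapRange_of_injective iotaV_zero f iotaV_injective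

lemma lhs_eq {r s : ℕ} (X : ℕ × ℕ → Matrix (Fin r) (Fin s) ℍ[ℝ])
    (f : ℕ →₀ (Fin s → ℍ[ℝ])) (i : ℕ) :
    sqnormC2 (∑ j ∈ (f.mapRange iotaV iotaV_zero).support,
        (chiMat (X (i, j))) *ᵥ (f.mapRange iotaV iotaV_zero) j) =
      sqnormH (∑ j ∈ f.support, (X (i, j)) *ᵥ f j) := by
  rw [support_mapRange_iotaV]
  have : ∑ j ∈ f.support, (chiMat (X (i, j))) *ᵥ (f.mapRange iotaV iotaV_zero) j =
      iotaV (∑ j ∈ f.support, (X (i, j)) *ᵥ f j) := by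
    rw [iotaV_sum]
    refine Finset.sum_congr rfl fun j _ => ?_
    rw [Finsupp.mapRange_apply, chiMat_mulVec]
  rw [this, sqnormC2_iotaV]

lemma rhs_eq {s : ℕ} (f : ℕ →₀ (Fin s → ℍ[ℝ])) :
    ∑ j ∈ (f.mapRange iotaV iotaV_zero).support, sqnormC2 ((f.mapRange iotaV iotaV_zero) j) =
      ∑ j ∈ f.support, sqnormH (f j) := by
  rw [support_mapRange_iotaV]
  refine Finset.sum_congr rfl fun j _ => ?_
  rw [Finsupp.mapRange_apply, sqnormC2_iotaV]

/-- The block operator `τ = (X_{ij})` is bounded with norm at most `K` from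
`ℓ²(ℕ, ℍ^s)` to `ℓ²(ℕ, ℍ^r)` if and only if the block operator `T = (χ(X_{ij}))` is
bounded with norm at most `K` from `ℓ²(ℕ, ℂ^{2s})` to `ℓ²(ℕ, ℂ^{2r})`; in particular
both have the same norm.  Boundedness is expressed through the defining inequalities
on finitely supported sequences (with arbitrary finite partial sums on the left). -/
theorem chiMat_block_operator_bounded_iff (r s : ℕ)
    (X : ℕ × ℕ → Matrix (Fin r) (Fin s) ℍ[ℝ]) (K : ℝ) (hK : 0 ≤ K) :
    (∀ f : ℕ →₀ (Fin s → ℍ[ℝ]), ∀ N : Finset ℕ,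
        ∑ i ∈ N, sqnormH (∑ j ∈ f.support, (X (i, j)) *ᵥ f j) ≤
          K ^ 2 * ∑ j ∈ f.support, sqnormH (f j)) ↔
    (∀ g : ℕ →₀ (Fin s ⊕ Fin s → ℂ), ∀ N : Finset ℕ,
        ∑ i ∈ N, sqnormC2 (∑ j ∈ g.support, (chiMat (X (i, j))) *ᵥ g j) ≤
          K ^ 2 * ∑ j ∈ g.support, sqnormC2 (g j)) := by
  constructor
  · intro h g N
    set f : ℕ →₀ (Fin s → ℍ[ℝ]) := g.mapRange iotaInv iotaInv_zero with hf
    have hg : g = f.mapRange iotaV iotaV_zero := by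
      ext j a
      rw [Finsupp.mapRange_apply, hf, Finsupp.mapRange_apply, iotaV_iotaInv]
    rw [hg]
    calc ∑ i ∈ N, sqnormC2 (∑ j ∈ (f.mapRange iotaV iotaV_zero).support,
            (chiMat (X (i, j))) *ᵥ (f.mapRange iotaV iotaV_zero) j)
        = ∑ i ∈ N, sqnormH (∑ j ∈ f.support, (X (i, j)) *ᵥ f j) :=
          Finset.sum_congr rfl fun i _ => lhs_eq X f i
      _ ≤ K ^ 2 * ∑ j ∈ f.support, sqnormH (f j) := h f N
      _ = K ^ 2 * ∑ j ∈ (f.mapRange iotaV iotaV_zero).support,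
            sqnormC2 ((f.mapRange iotaV iotaV_zero) j) := by rw [rhs_eq]
  · intro h f N
    calc ∑ i ∈ N, sqnormH (∑ j ∈ f.support, (X (i, j)) *ᵥ f j)
        = ∑ i ∈ N, sqnormC2 (∑ j ∈ (f.mapRange iotaV iotaV_zero).support,
            (chiMat (X (i, j))) *ᵥ (f.mapRange iotaV iotaV_zero) j) :=
          (Finset.sum_congr rfl fun i _ => (lhs_eq X f i).symm)
      _ ≤ K ^ 2 * ∑ j ∈ (f.mapRange iotaV iotaV_zero).support,
            sqnormC2 ((f.mapRange iotaV iotaV_zero) j) := h _ N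
      _ = K ^ 2 * ∑ j ∈ f.support, sqnormH (f j) := by rw [rhs_eq]
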